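/- Under the balanced within-stratum design, the difference between the overall difference-in-means estimator and the inverse-probability-weighting estimator admits the exact stratum decomposition τ̂_DIM − τ̂_IPW = Σ_{x ∈ 𝒳, n_x > 0} (n_x / n) · (1 − 1/π̂(x)) · τ̂_HTE(x). -/

import Mathlib

open Finset

noncomputable section

variable {N : ℕ} {𝒳 : Type*} [Fintype 𝒳] [DecidableEq 𝒳]

/-- Number of sampled units in stratum `x`: `n_x = #{i : S_i = 1, X_i = x}`. -/
def nStratum (X : Fin N → 𝒳) (S : Fin N → Bool) (x : 𝒳) : ℕ :=
  (univ.filter fun i => S i = true ∧ X i = x).card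

/-- Total number of sampled units: `n = #{i : S_i = 1}`. -/
def nSample (S : Fin N → Bool) : ℕ :=
  (univ.filter fun i => S i = true).card

/-- Stratum-level difference-in-means estimator `τ̂_HTE(x)`. -/
def tauHTE (X : Fin N → 𝒳) (S W : Fin N → Bool) (Y1 Y0 : Fin N → ℝ) (x : 𝒳) : ℝ :=
  (2 / (nStratum X S x : ℝ)) *
      ∑ i ∈ univ.filter (fun i => S i = true ∧ X i = x ∧ W i = true), Y1 i
    - (2 / (nStratum X S x : ℝ)) *
      ∑ i ∈ univ.filter (fun i => S i = true ∧ X i = x ∧ W i = false), Y0 i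

/-- Overall difference-in-means estimator `τ̂_DIM`. -/
def tauDIM (S W : Fin N → Bool) (Y1 Y0 : Fin N → ℝ) : ℝ :=
  (1 / ((univ.filter fun i => S i = true ∧ W i = true).card : ℝ)) *
      ∑ i ∈ univ.filter (fun i => S i = true ∧ W i = true), Y1 i
    - (1 / ((univ.filter fun i => S i = true ∧ W i = false).card : ℝ)) *
      ∑ i ∈ univ.filter (fun i => S i = true ∧ W i = false), Y0 i

/-- Inverse-probability-weighting estimator `τ̂_IPW` with weight function `π̂`. -/
def tauIPW (X : Fin N → 𝒳) (S W : Fin N → Bool) (Y1 Y0 : Fin N → ℝ) (piHat : 𝒳 → ℝ) : ℝ :=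
  (1 / ((univ.filter fun i => S i = true ∧ W i = true).card : ℝ)) *
      ∑ i ∈ univ.filter (fun i => S i = true ∧ W i = true), Y1 i / piHat (X i)
    - (1 / ((univ.filter fun i => S i = true ∧ W i = false).card : ℝ)) *
      ∑ i ∈ univ.filter (fun i => S i = true ∧ W i = false), Y0 i / piHat (X i)

/-- Balanced within-stratum design: in every nonempty stratum, the number of sampled
treated units equals the number of sampled control units, and both are positive. -/
def BalancedDesign (X : Fin N → 𝒳) (S W : Fin N → Bool) : Prop :=
  ∀ x : 𝒳, 0 < nStratum X S x →
    (univ.filter fun i => S i = true ∧ X i = x ∧ W i = true).card =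
        (univ.filter fun i => S i = true ∧ X i = x ∧ W i = false).card ∧
    0 < (univ.filter fun i => S i = true ∧ X i = x ∧ W i = true).card

/-- Under the balanced within-stratum design, the difference between the overall
difference-in-means estimator and the inverse-probability-weighting estimator admits the
exact stratum decomposition
`τ̂_DIM − τ̂_IPW = Σ_{x ∈ 𝒳, n_x > 0} (n_x / n) · (1 − 1/π̂(x)) · τ̂_HTE(x)`. -/
theorem tauDIM_sub_tauIPW_decomposition
    (X : Fin N → 𝒳) (S W : Fin N → Bool) (Y1 Y0 : Fin N → ℝ) (piHat : 𝒳 → ℝ)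
    (hpi : ∀ x, 0 < piHat x ∧ piHat x ≤ 1)
    (hn : 0 < nSample S) (hbal : BalancedDesign X S W) :
    tauDIM S W Y1 Y0 - tauIPW X S W Y1 Y0 piHat =
      ∑ x ∈ univ.filter (fun x => 0 < nStratum X S x),
        ((nStratum X S x : ℝ) / (nSample S : ℝ)) * (1 - 1 / piHat x) *
          tauHTE X S W Y1 Y0 x := by
  classical
  set T := univ.filter (fun i : Fin N => S i = true ∧ W i = true) with hTdef
  set C := univ.filter (fun i : Fin N => S i = true ∧ W i = false) with hCdef
  have hTx : ∀ x : 𝒳, T.filter (fun i => X i = x) =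
      univ.filter (fun i => S i = true ∧ X i = x ∧ W i = true) := by
    intro x
    rw [hTdef, filter_filter]
    apply filter_congr
    intro i _
    constructor <;> (intro h; tauto)
  have hCx : ∀ x : 𝒳, C.filter (fun i => X i = x) =
      univ.filter (fun i => S i = true ∧ X i = x ∧ W i = false) := by
    intro x
    rw [hCdef, filter_filter]
    apply filter_congr
    intro i _
    constructor <;> (intro h; tauto)
  have hsplit : ∀ x, nStratum X S x =
      (T.filter fun i => X i = x).card + (C.filter fun i => X i = x).card := by
    intro x
    rw [hTx, hCx, nStratum,
      ← Finset.card_filter_add_card_filter_not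
        (s := univ.filter (fun i => S i = true ∧ X i = x)) (p := fun i => W i = true)]
    congr 1
    · rw [filter_filter]
      apply congr_arg Finset.card
      apply filter_congr
      intro i _
      constructor <;> (intro h; tauto)
    · rw [filter_filter]
      apply congr_arg Finset.card
      apply filter_congr
      intro i _
      simp only [Bool.not_eq_true]
      constructor <;> (intro h; tauto)
  have hTCx : ∀ x, (T.filter fun i => X i = x).card = (C.filter fun i => X i = x).card := by
    intro x
    rcases Nat.eq_zero_or_pos (nStratum X S x) with h0 | hpos
    · have := hsplit x; omega
    · have := (hbal x hpos).1
      rw [hTx, hCx]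
      exact this
  have hcardT : T.card = ∑ x : 𝒳, (T.filter fun i => X i = x).card :=
    Finset.card_eq_sum_card_fiberwise (fun i _ => mem_univ (X i))
  have hcardC : C.card = ∑ x : 𝒳, (C.filter fun i => X i = x).card :=
    Finset.card_eq_sum_card_fiberwise (fun i _ => mem_univ (X i))
  have hTC : T.card = C.card := by
    rw [hcardT, hcardC]
    exact Finset.sum_congr rfl (fun x _ => hTCx x)
  have hnTC : nSample S = T.card + C.card := by
    rw [nSample,
      ← Finset.card_filter_add_card_filter_not
        (s := univ.filter (fun i : Fin N => S i = true)) (p := fun i => W i = true)]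
    congr 1
    · rw [hTdef, filter_filter]
    · rw [hCdef, filter_filter]
      apply congr_arg Finset.card
      apply filter_congr
      intro i _
      simp only [Bool.not_eq_true]
  have hn2 : nSample S = 2 * T.card := by omega
  have hTpos : 0 < T.card := by omega
  have hTne : (T.card : ℝ) ≠ 0 := Nat.cast_ne_zero.mpr hTpos.ne'
  have hnne : (nSample S : ℝ) ≠ 0 := Nat.cast_ne_zero.mpr hn.ne'
  have hinv : (1 : ℝ) / (T.card : ℝ) = 2 / (nSample S : ℝ) := by
    have : (nSample S : ℝ) = 2 * (T.card : ℝ) := by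
      rw [hn2]; push_cast; ring
    rw [this]
    field_simp
  have hsum1 : ∑ i ∈ T, (Y1 i - Y1 i / piHat (X i)) =
      ∑ x : 𝒳, (1 - 1 / piHat x) * ∑ i ∈ T.filter (fun i => X i = x), Y1 i := by
    rw [← Finset.sum_fiberwise_of_maps_to (g := X) (fun i _ => mem_univ (X i))
      (fun i => Y1 i - Y1 i / piHat (X i))]
    refine Finset.sum_congr rfl (fun x _ => ?_)
    rw [mul_sum]
    refine Finset.sum_congr rfl (fun i hi => ?_)
    have hx : X i = x := (mem_filter.mp hi).2
    rw [hx]; ring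
  have hsum0 : ∑ i ∈ C, (Y0 i - Y0 i / piHat (X i)) =
      ∑ x : 𝒳, (1 - 1 / piHat x) * ∑ i ∈ C.filter (fun i => X i = x), Y0 i := by
    rw [← Finset.sum_fiberwise_of_maps_to (g := X) (fun i _ => mem_univ (X i))
      (fun i => Y0 i - Y0 i / piHat (X i))]
    refine Finset.sum_congr rfl (fun x _ => ?_)
    rw [mul_sum]
    refine Finset.sum_congr rfl (fun i hi => ?_)
    have hx : X i = x := (mem_filter.mp hi).2
    rw [hx]; ring
  have hRHSterm : ∀ x ∈ univ.filter (fun x => 0 < nStratum X S x),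
      ((nStratum X S x : ℝ) / (nSample S : ℝ)) * (1 - 1 / piHat x) *
          tauHTE X S W Y1 Y0 x =
      (2 / (nSample S : ℝ)) * ((1 - 1 / piHat x) * ∑ i ∈ T.filter (fun i => X i = x), Y1 i
        - (1 - 1 / piHat x) * ∑ i ∈ C.filter (fun i => X i = x), Y0 i) := by
    intro x hx
    have hpos : 0 < nStratum X S x := (mem_filter.mp hx).2
    have hne : (nStratum X S x : ℝ) ≠ 0 := Nat.cast_ne_zero.mpr hpos.ne'
    rw [tauHTE, ← hTx, ← hCx]
    field_simp
  have hRHS : ∑ x ∈ univ.filter (fun x => 0 < nStratum X S x),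
      ((nStratum X S x : ℝ) / (nSample S : ℝ)) * (1 - 1 / piHat x) *
        tauHTE X S W Y1 Y0 x =
      ∑ x : 𝒳, (2 / (nSample S : ℝ)) *
        ((1 - 1 / piHat x) * ∑ i ∈ T.filter (fun i => X i = x), Y1 i
          - (1 - 1 / piHat x) * ∑ i ∈ C.filter (fun i => X i = x), Y0 i) := by
    rw [Finset.sum_congr rfl hRHSterm]
    apply Finset.sum_subset (filter_subset _ _)
    intro x _ hx
    have h0 : nStratum X S x = 0 := by
      by_contra h
      exact hx (mem_filter.mpr ⟨mem_univ x, Nat.pos_of_ne_zero h⟩)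
    have hT0 : (T.filter fun i => X i = x) = ∅ := by
      have := hsplit x
      rw [h0] at this
      exact Finset.card_eq_zero.mp (by omega)
    have hC0 : (C.filter fun i => X i = x) = ∅ := by
      have := hsplit x
      rw [h0] at this
      exact Finset.card_eq_zero.mp (by omega)
    rw [hT0, hC0]
    simp
  rw [hRHS, tauDIM, tauIPW, ← hTdef, ← hCdef, ← hTC]
  have : (1 / (T.card : ℝ)) * ∑ i ∈ T, Y1 i
      - (1 / (T.card : ℝ)) * ∑ i ∈ C, Y0 i
      - ((1 / (T.card : ℝ)) * ∑ i ∈ T, Y1 i / piHat (X i)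
        - (1 / (T.card : ℝ)) * ∑ i ∈ C, Y0 i / piHat (X i))
      = (1 / (T.card : ℝ)) * ∑ i ∈ T, (Y1 i - Y1 i / piHat (X i))
        - (1 / (T.card : ℝ)) * ∑ i ∈ C, (Y0 i - Y0 i / piHat (X i)) := by
    rw [Finset.sum_sub_distrib, Finset.sum_sub_distrib]
    ring
  rw [this, hsum1, hsum0, hinv, Finset.mul_sum, Finset.mul_sum, ← Finset.sum_sub_distrib]
  refine Finset.sum_congr rfl (fun x _ => ?_)
  ring
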